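/- arXiv:1511.01779 — 3 statements merged into one kernel-verified Lean document; each statement's English description precedes it below -/
import Mathlib

section
/- In any execution of the mutual-exclusion algorithm built from single-writer lock registers r_{ij}, at most one process holds the lock on any given object: if process p_i writes 1 to r_{ij}, then reads r_{kj} = 0 for all k ≠ i, and process p_k writes 1 to r_{kj}, then reads r_{tj} = 0 for all t ≠ k, on the same object j, with all reads returning the latest preceding write, then a contradiction arises — hence two processes cannot both successfully acquire the lock on object j. -/
/-- An event on the single-object lock registers: `write p v` is process `p`
writing `v` to its own register `r_p`, and `read p q v` is process `p` reading
register `r_q` of process `q` and obtaining value `v`. -/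
inductive Ev (P : Type*) where
  | write (p : P) (v : Bool)
  | read (p : P) (q : P) (v : Bool)

/-- The value of register `r_q` after executing a list of events
(initially `false`, and the latest write wins). -/
def regVal {P : Type*} [DecidableEq P] (l : List (Ev P)) (q : P) : Bool :=
  l.foldl (fun acc e =>
    match e with
    | Ev.write p v => if p = q then v else acc
    | Ev.read _ _ _ => acc) false

/-- Process `p` acquires the lock in execution `E`: it writes `1` to its own
register, never subsequently writes `0` to it (no release), and afterwards
reads every other process's register as `0`. -/
def acquires {P : Type*} (E : List (Ev P)) (p : P) : Prop :=
  ∃ w, E[(w : ℕ)]? = some (Ev.write p true) ∧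
    (∀ u v, w < u → E[u]? = some (Ev.write p v) → v = true) ∧
    (∀ q, q ≠ p → ∃ t, w < t ∧ E[t]? = some (Ev.read p q false))


lemma regVal_snoc {P : Type*} [DecidableEq P] (l : List (Ev P)) (e : Ev P) (q : P) :
    regVal (l ++ [e]) q =
      (match e with
       | Ev.write p v => if p = q then v else regVal l q
       | Ev.read _ _ _ => regVal l q) := by
  simp only [regVal, List.foldl_append, List.foldl_cons, List.foldl_nil]

lemma regVal_true_of_write {P : Type*} [DecidableEq P] (l : List (Ev P)) (q : P) (w : ℕ)
    (hw : l[w]? = some (Ev.write q true))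
    (hafter : ∀ u v, w < u → l[u]? = some (Ev.write q v) → v = true) :
    regVal l q = true := by
  induction l using List.reverseRecOn with
  | nil => simp at hw
  | append_singleton l e ih =>
    have hlen : w < l.length + 1 := by
      have := List.getElem?_eq_some_iff.mp hw
      simpa using this.1
    rcases lt_or_eq_of_le (Nat.lt_succ_iff.mp hlen) with hlt | heq
    · have hw' : l[w]? = some (Ev.write q true) := by
        rw [← List.getElem?_append_left hlt]; exact hw
      have hafter' : ∀ u v, w < u → l[u]? = some (Ev.write q v) → v = true := by
        intro u v huw hu
        have hul : u < l.length := (List.getElem?_eq_some_iff.mp hu).1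
        exact hafter u v huw (by rw [← List.getElem?_append_left hul] at hu; exact hu)
      have hrl := ih hw' hafter'
      rw [regVal_snoc]
      cases e with
      | read a b v => simpa using hrl
      | write a v =>
        by_cases hqa : a = q
        · subst hqa
          have : (l ++ [Ev.write a v])[l.length]? = some (Ev.write a v) := by
            simp
          have := hafter l.length v hlt this
          simp [this]
        · simp [hqa, hrl]
    · subst heq
      have : (l ++ [e])[l.length]? = some e := by simp
      rw [this] at hw
      injection hw with hw
      subst hw
      rw [regVal_snoc]
      simp

/-- Mutual exclusion of the single-writer register lock: in an execution where
every read returns the value of the latest preceding write, two distinct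
processes cannot both acquire the lock on the same object. -/
theorem stmt6 {P : Type*} [DecidableEq P] (E : List (Ev P))
    (hread : ∀ t p q v, E[t]? = some (Ev.read p q v) → v = regVal (E.take t) q)
    (p k : P) (hpk : p ≠ k)
    (hp : acquires E p) (hk : acquires E k) :
    False := by
  obtain ⟨wp, hwp, hwpA, hpread⟩ := hp
  obtain ⟨wk, hwk, hwkA, hkread⟩ := hk
  obtain ⟨tp, htp1, htp2⟩ := hpread k (Ne.symm hpk)
  obtain ⟨tk, htk1, htk2⟩ := hkread p hpk
  have hvp := hread tp p k false htp2
  have hvk := hread tk k p false htk2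
  -- if wk < tp then regVal (E.take tp) k = true, contradiction
  have h1 : ¬ wk < tp := by
    intro hlt
    have hget : (E.take tp)[wk]? = some (Ev.write k true) := by
      rw [List.getElem?_take_of_lt hlt]; exact hwk
    have hA : ∀ u v, wk < u → (E.take tp)[u]? = some (Ev.write k v) → v = true := by
      intro u v hu hget'
      have hul : u < (E.take tp).length := (List.getElem?_eq_some_iff.mp hget').1
      have hutp : u < tp := lt_of_lt_of_le hul (by simpa using List.length_take_le tp E)
      exact hwkA u v hu (by rw [List.getElem?_take_of_lt hutp] at hget'; exact hget')
    have := regVal_true_of_write (E.take tp) k wk hget hA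
    rw [this] at hvp
    exact Bool.false_ne_true hvp
  have h2 : ¬ wp < tk := by
    intro hlt
    have hget : (E.take tk)[wp]? = some (Ev.write p true) := by
      rw [List.getElem?_take_of_lt hlt]; exact hwp
    have hA : ∀ u v, wp < u → (E.take tk)[u]? = some (Ev.write p v) → v = true := by
      intro u v hu hget'
      have hul : u < (E.take tk).length := (List.getElem?_eq_some_iff.mp hget').1
      have hutk : u < tk := lt_of_lt_of_le hul (by simpa using List.length_take_le tk E)
      exact hwpA u v hu (by rw [List.getElem?_take_of_lt hutk] at hget'; exact hget')
    have := regVal_true_of_write (E.take tk) p wp hget hA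
    rw [this] at hvk
    exact Bool.false_ne_true hvk
  omega
end

section
/- A distinguishing argument forces linearly many distinct accesses: suppose there are m−1 'adversary executions' producing m−1 pairwise distinct memory configurations C₁, ..., C_{m−1}, all differing from a baseline configuration C₀ only in the states of pairwise-disjoint nonempty sets B₁, ..., B_{m−1} of base objects, and a deterministic operation must produce a different output depending on which of C₀, C₁, ..., C_{m−1} it runs in. Then the operation must read at least m−1 distinct base objects, at least one from each Bⱼ. -/
/-- A distinguishing argument forces linearly many distinct accesses: given
`k` adversary configurations `C j`, each agreeing with the baseline `C0`
outside a set `Bs j` of base objects, with the `Bs j` pairwise disjoint and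
nonempty, a deterministic (adaptive) read-only operation that must output
differently in each `C j` than in `C0` must read, in its run from `C0`, a base
object from each `Bs j`, hence at least `k` distinct base objects. -/
theorem stmt12 {B V O : Type*} [DecidableEq B] (k : ℕ)
    (Bs : Fin k → Set B)
    (hdisj : ∀ j j' : Fin k, j ≠ j' → Bs j ∩ Bs j' = ∅)
    (hne : ∀ j, (Bs j).Nonempty)
    (C0 : B → V) (C : Fin k → B → V)
    (hagree : ∀ j b, b ∉ Bs j → C j b = C0 b)
    (reads : (B → V) → List B) (out : (B → V) → O)
    (hdet : ∀ M M' : B → V, (∀ b ∈ reads M, M b = M' b) →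
      reads M' = reads M ∧ out M' = out M)
    (hout : ∀ j, out (C j) ≠ out C0) :
    (∀ j, ∃ b ∈ Bs j, b ∈ reads C0) ∧ k ≤ (reads C0).toFinset.card := by
  have key : ∀ j, ∃ b ∈ Bs j, b ∈ reads C0 := by
    intro j
    by_contra h
    push_neg at h
    have hag : ∀ b ∈ reads C0, C0 b = C j b := by
      intro b hb
      exact (hagree j b (fun hbj => h b hbj hb)).symm
    have := hdet C0 (C j) hag
    exact hout j this.2
  refine ⟨key, ?_⟩
  choose f hf hfr using key
  have hinj : Function.Injective f := by
    intro j j' he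
    by_contra hne'
    have : f j ∈ Bs j ∩ Bs j' := ⟨hf j, he ▸ hf j'⟩
    rw [hdisj j j' hne'] at this
    exact this
  calc k = Finset.univ.card (α := Fin k) := (Finset.card_fin k).symm
    _ = (Finset.univ.image f).card := (Finset.card_image_of_injective _ hinj).symm
    _ ≤ (reads C0).toFinset.card := by
        apply Finset.card_le_card
        intro b hb
        simp only [Finset.mem_image] at hb
        obtain ⟨j, -, rfl⟩ := hb
        simpa using hfr j
end

section
/- The RAW/AWAR-freedom commuting argument: let π = π_s · π_w · π_f be a sequence of memory events by transaction T₁ where π_s contains no writes to base objects, π_w is a single write that is not an atomic-write-after-read (AWAR), and π_w · π_f contains no read-after-write (RAW) pattern, i.e., every read in π_f is to a base object previously written in π_w · π_f by T₁. Then for any event sequence ρ by another process touching arbitrary base objects, the executions π_s · π_w · π_f and π_s · ρ · π_w · π_f are indistinguishable to T₁ (every read by T₁ returns the same value in both), and π_s · ρ is indistinguishable to the process executing ρ from ρ alone. -/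
/-- A memory event: a read of base object `b` by process `p`, or a write of
value `v` to base object `b` by process `p`. -/
inductive MEv (P B V : Type*) where
  | read (p : P) (b : B)
  | write (p : P) (b : B) (v : V)

/-- The process performing an event. -/
def MEv.proc {P B V : Type*} : MEv P B V → P
  | .read p _ => p
  | .write p _ _ => p

/-- Whether an event is a write. -/
def MEv.isWrite {P B V : Type*} : MEv P B V → Prop
  | .read _ _ => False
  | .write _ _ _ => True

/-- The sequence of values returned by the reads of process `p` when the event
list is executed from memory `M` (a read returns the value of the latest
preceding write to that object, or the initial value). -/
def view {P B V : Type*} [DecidableEq P] [DecidableEq B] (p : P) :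
    (B → V) → List (MEv P B V) → List V
  | _, [] => []
  | M, MEv.read q b :: rest => (if q = p then [M b] else []) ++ view p M rest
  | M, MEv.write _ b v :: rest => view p (Function.update M b v) rest

section helpers
variable {P B V : Type*} [DecidableEq P] [DecidableEq B]

/-- Run the writes of an event list on a memory. -/
def runM : (B → V) → List (MEv P B V) → (B → V)
  | M, [] => M
  | M, MEv.read _ _ :: rest => runM M rest
  | M, MEv.write _ b v :: rest => runM (Function.update M b v) rest

lemma view_append_nowrite (p : P) (M : B → V) (πs l : List (MEv P B V))
    (hnw : ∀ e ∈ πs, ¬ MEv.isWrite e) :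
    view p M (πs ++ l) = view p M πs ++ view p M l := by
  induction πs generalizing M with
  | nil => rfl
  | cons e rest ih =>
    cases e with
    | read q b =>
      simp only [List.cons_append, view, List.append_eq,
        ih M (fun e h => hnw e (List.mem_cons_of_mem _ h)), List.append_assoc]
    | write q b v => exact absurd trivial (hnw (MEv.write q b v) List.mem_cons_self)

lemma view_other_nil (p T1 : P) (hne : p ≠ T1) (M : B → V)
    (πs : List (MEv P B V)) (hproc : ∀ e ∈ πs, MEv.proc e = T1)
    (hnw : ∀ e ∈ πs, ¬ MEv.isWrite e) :
    view p M πs = [] := by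
  induction πs generalizing M with
  | nil => rfl
  | cons e rest ih =>
    cases e with
    | read q b =>
      have hq : q = T1 := hproc (MEv.read q b) List.mem_cons_self
      simp only [view, if_neg (fun h : q = p => hne (h ▸ hq))]
      exact ih M (fun e h => hproc e (List.mem_cons_of_mem _ h))
        (fun e h => hnw e (List.mem_cons_of_mem _ h))
    | write q b v => exact absurd trivial (hnw (MEv.write q b v) List.mem_cons_self)

lemma view_other_append (T1 p2 : P) (hne : p2 ≠ T1) (M : B → V)
    (ρ l : List (MEv P B V)) (hproc : ∀ e ∈ ρ, MEv.proc e = p2) :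
    view T1 M (ρ ++ l) = view T1 (runM M ρ) l := by
  induction ρ generalizing M with
  | nil => rfl
  | cons e rest ih =>
    cases e with
    | read q b =>
      have hq : q = p2 := hproc (MEv.read q b) List.mem_cons_self
      simp only [List.cons_append, view, runM,
        if_neg (fun h : q = T1 => hne (hq ▸ h))]
      exact ih M (fun e h => hproc e (List.mem_cons_of_mem _ h))
    | write q b v =>
      simp only [List.cons_append, view, runM]
      exact ih _ (fun e h => hproc e (List.mem_cons_of_mem _ h))

lemma view_agree (T1 : P) :
    ∀ (πf : List (MEv P B V)) (M1 M2 : B → V),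
    (∀ (t : ℕ) (q : P) (b : B), πf[t]? = some (MEv.read q b) →
      M1 b = M2 b ∨ ∃ u v, u < t ∧ πf[u]? = some (MEv.write T1 b v)) →
    view T1 M1 πf = view T1 M2 πf := by
  intro πf
  induction πf with
  | nil => intro _ _ _; rfl
  | cons e rest ih =>
    intro M1 M2 H
    cases e with
    | read q b =>
      have h0 : M1 b = M2 b := by
        rcases H 0 q b (by simp) with h | ⟨u, v, hu, _⟩
        · exact h
        · omega
      have hrest : view T1 M1 rest = view T1 M2 rest := by
        apply ih
        intro t q' b' ht
        rcases H (t + 1) q' b' (by simpa using ht) with h | ⟨u, v, hu, hw⟩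
        · exact Or.inl h
        · cases u with
          | zero => simp at hw
          | succ u' =>
            exact Or.inr ⟨u', v, by omega, by simpa using hw⟩
      simp [view, h0, hrest]
    | write p b v =>
      simp only [view]
      apply ih
      intro t q' b' ht
      rcases H (t + 1) q' b' (by simpa using ht) with h | ⟨u, w, hu, hw⟩
      · left
        by_cases hb : b' = b
        · subst hb; simp [Function.update]
        · simp [Function.update, hb, h]
      · cases u with
        | zero =>
          left
          simp only [List.getElem?_cons_zero, Option.some.injEq] at hw
          cases hw
          simp [Function.update]
        | succ u' =>
          exact Or.inr ⟨u', w, by omega, by simpa using hw⟩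

end helpers

/-- The RAW/AWAR-freedom commuting argument: if `π_s` (by `T₁`) contains no
writes, `π_w` is a single plain (non-AWAR) write by `T₁`, and every read in
`π_f` (by `T₁`) is to a base object previously written by `T₁` within
`π_w · π_f` (no RAW), then inserting an event sequence `ρ` of another process
between `π_s` and `π_w` is indistinguishable to `T₁`, and prepending `π_s`
before `ρ` is indistinguishable to the process executing `ρ`. -/

theorem stmt13 {P B V : Type*} [DecidableEq P] [DecidableEq B]
    (T1 p2 : P) (hne : p2 ≠ T1) (M0 : B → V)
    (πs πf ρ : List (MEv P B V)) (bw : B) (vw : V)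
    (hs_proc : ∀ e ∈ πs, MEv.proc e = T1)
    (hf_proc : ∀ e ∈ πf, MEv.proc e = T1)
    (hρ_proc : ∀ e ∈ ρ, MEv.proc e = p2)
    (hs_nowrite : ∀ e ∈ πs, ¬ MEv.isWrite e)
    (hRAWfree : ∀ (t : ℕ) (q : P) (b : B), πf[t]? = some (MEv.read q b) →
      b = bw ∨ ∃ u v, u < t ∧ πf[u]? = some (MEv.write T1 b v)) :
    view T1 M0 (πs ++ MEv.write T1 bw vw :: πf) =
        view T1 M0 (πs ++ ρ ++ MEv.write T1 bw vw :: πf) ∧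
      view p2 M0 (πs ++ ρ) = view p2 M0 ρ := by
  constructor
  · have h2 : πs ++ ρ ++ MEv.write T1 bw vw :: πf
        = πs ++ (ρ ++ MEv.write T1 bw vw :: πf) := by
      simp [List.append_assoc]
    rw [view_append_nowrite T1 M0 πs (MEv.write T1 bw vw :: πf) hs_nowrite, h2,
      view_append_nowrite T1 M0 πs _ hs_nowrite,
      view_other_append T1 p2 hne M0 ρ _ hρ_proc]
    congr 1
    simp only [view]
    apply view_agree
    intro t q b ht
    rcases hRAWfree t q b ht with hb | h
    · subst hb; left; simp [Function.update]
    · exact Or.inr h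
  · rw [view_append_nowrite p2 M0 πs ρ hs_nowrite,
      view_other_nil p2 T1 hne M0 πs hs_proc hs_nowrite]
    simp
end
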